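/- Let n > m > 1 be real and for A > 0 define E_2^{nm}(A) = (nm/(n−m))·(1/2^5)·[ (2^{2+n}−1)(1+n)ζ(n+2)/(2A)^n − (2^{2+m}−1)(1+m)ζ(m+2)/(2A)^m ], and set A_c^{nm} = (1/2)·[ ((2^{2+n}−1)(1+n)ζ(n+2)) / ((2^{2+m}−1)(1+m)ζ(m+2)) ]^{1/(n−m)}. Then for all A > 0: E_2^{nm}(A) > 0 if A < A_c^{nm}, E_2^{nm}(A) = 0 if and only if A = A_c^{nm}, and E_2^{nm}(A) < 0 if A > A_c^{nm}. -/

import Mathlib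

open Real Filter

/-- The Riemann zeta function `ζ(s) = Σ_{j=1}^∞ j^{-s}` for real `s > 1`. -/
noncomputable def rzeta (s : ℝ) : ℝ := ∑' j : ℕ, ((j : ℝ) + 1) ^ (-s)

/-- The coefficient `E₂^{nm}(A)` of `ε²` in the expansion of the bipartite energy of the
1D Lennard-Jones model around the equidistant configuration. -/
noncomputable def E2 (n m A : ℝ) : ℝ :=
  (n * m / (n - m)) * (1 / 2 ^ 5) *
    ((2 ^ (2 + n) - 1) * (1 + n) * rzeta (n + 2) / (2 * A) ^ n -
      (2 ^ (2 + m) - 1) * (1 + m) * rzeta (m + 2) / (2 * A) ^ m)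

/-- The transition point `A_c^{nm}` of the 1D `(n,m)` Lennard-Jones model. -/
noncomputable def Ac (n m : ℝ) : ℝ :=
  (1 / 2) * (((2 ^ (2 + n) - 1) * (1 + n) * rzeta (n + 2)) /
      ((2 ^ (2 + m) - 1) * (1 + m) * rzeta (m + 2))) ^ (1 / (n - m))

lemma rzeta_pos (s : ℝ) (hs : 1 < s) : 0 < rzeta s := by
  have hsum : Summable (fun j : ℕ => ((j : ℝ) + 1) ^ (-s)) := by
    have : Summable (fun j : ℕ => (j : ℝ) ^ (-s)) :=
      Real.summable_nat_rpow.mpr (by linarith)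
    have h1 := (summable_nat_add_iff 1).mpr this
    refine h1.congr fun j => ?_
    push_cast
    ring_nf
  refine Summable.tsum_pos hsum (fun j => ?_) 0 (by positivity)
  positivity

lemma coeff_pos (p : ℝ) (hp : 1 < p) :
    0 < (2 ^ (2 + p) - 1) * (1 + p) * rzeta (p + 2) := by
  have h1 : (1 : ℝ) < 2 ^ (2 + p) := by
    calc (1 : ℝ) = 2 ^ (0 : ℝ) := by simp
    _ < 2 ^ (2 + p) := by
        apply Real.rpow_lt_rpow_left_iff (by norm_num) |>.mpr; linarith
  have := rzeta_pos (p + 2) (by linarith)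
  exact mul_pos (mul_pos (by linarith) (by linarith)) this

/-- For `n > m > 1` and all `A > 0`: `E₂^{nm}(A) > 0` if `A < A_c^{nm}`,
`E₂^{nm}(A) = 0` iff `A = A_c^{nm}`, and `E₂^{nm}(A) < 0` if `A > A_c^{nm}`. -/
theorem E2_sign_change_at_transition_point
    (n m : ℝ) (hm : 1 < m) (hnm : m < n) :
    ∀ A : ℝ, 0 < A →
      (A < Ac n m → 0 < E2 n m A) ∧
      (E2 n m A = 0 ↔ A = Ac n m) ∧
      (Ac n m < A → E2 n m A < 0) := by
  set Cn := (2 ^ (2 + n) - 1) * (1 + n) * rzeta (n + 2) with hCn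
  set Cm := (2 ^ (2 + m) - 1) * (1 + m) * rzeta (m + 2) with hCm
  have hCnp : 0 < Cn := coeff_pos n (lt_trans hm hnm)
  have hCmp : 0 < Cm := coeff_pos m hm
  have hK : 0 < (n * m / (n - m)) * (1 / 2 ^ 5 : ℝ) := by
    have h1 : 0 < n * m := by nlinarith
    have h2 : 0 < n - m := by linarith
    positivity
  have hp : 0 < n - m := by linarith
  intro A hA
  set x := 2 * A with hx
  have hxp : 0 < x := by positivity
  -- key: A < Ac ↔ x^(n-m) < Cn/Cm, etc.
  have h2Ac : 2 * Ac n m = (Cn / Cm) ^ (1 / (n - m)) := by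
    rw [Ac]; ring
  have hlt : ∀ {a b : ℝ}, a < b ↔ 2 * a < 2 * b := by
    intro a b; constructor <;> intro h <;> linarith
  -- equivalence between sign of bracket and comparison of A with Ac
  have hbracket : Cn / x ^ n - Cm / x ^ m =
      (Cm / x ^ n) * (Cn / Cm - x ^ (n - m)) := by
    have hxn : (0:ℝ) < x ^ n := Real.rpow_pos_of_pos hxp n
    have hxm : (0:ℝ) < x ^ m := Real.rpow_pos_of_pos hxp m
    have hsub : x ^ (n - m) = x ^ n / x ^ m := Real.rpow_sub hxp n m
    field_simp [hsub]
    rw [hsub]; field_simp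
  have hApos : A < Ac n m ↔ x ^ (n - m) < Cn / Cm := by
    rw [hlt, h2Ac, ← hx, one_div,
      Real.lt_rpow_inv_iff_of_pos hxp.le (by positivity) hp]
  have hAeq : A = Ac n m ↔ x ^ (n - m) = Cn / Cm := by
    constructor
    · intro h
      have : x = (Cn / Cm) ^ (1 / (n - m)) := by rw [hx, h, h2Ac]
      rw [this]
      rw [← Real.rpow_mul (by positivity), one_div, inv_mul_cancel₀ hp.ne',
        Real.rpow_one]
    · intro h
      have hx' : x = (Cn / Cm) ^ (1 / (n - m)) := by
        rw [← h]
        rw [← Real.rpow_mul hxp.le, mul_one_div, div_self hp.ne', Real.rpow_one]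
      have : 2 * A = 2 * Ac n m := by rw [← hx, hx', h2Ac]
      linarith
  have hE2 : E2 n m A = (n * m / (n - m)) * (1 / 2 ^ 5) *
      ((Cm / x ^ n) * (Cn / Cm - x ^ (n - m))) := by
    rw [E2, ← hCn, ← hCm, ← hx, hbracket]
  have hxn : (0:ℝ) < Cm / x ^ n := by
    have := Real.rpow_pos_of_pos hxp n; positivity
  refine ⟨fun h => ?_, ⟨fun h => ?_, fun h => ?_⟩, fun h => ?_⟩
  · have := hApos.mp h
    rw [hE2]
    have : 0 < Cn / Cm - x ^ (n - m) := by linarith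
    positivity
  · -- E2 = 0 → A = Ac
    rw [hE2] at h
    have h0 : Cn / Cm - x ^ (n - m) = 0 := by
      rcases mul_eq_zero.mp h with h' | h'
      · exact absurd h' (by positivity)
      · rcases mul_eq_zero.mp h' with h'' | h''
        · exact absurd h'' hxn.ne'
        · exact h''
    exact hAeq.mpr (by linarith)
  · rw [hE2, hAeq.mp h, sub_self, mul_zero, mul_zero]
  · have h1 : Cn / Cm ≤ x ^ (n - m) :=
      not_lt.mp fun hc => absurd (hApos.mpr hc) (by linarith)
    have h2 : x ^ (n - m) ≠ Cn / Cm := fun hc => absurd (hAeq.mpr hc) (by linarith)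
    have h3 : Cn / Cm - x ^ (n - m) < 0 :=
      sub_neg.mpr (lt_of_le_of_ne h1 h2.symm)
    rw [hE2]
    exact mul_neg_of_pos_of_neg hK (mul_neg_of_pos_of_neg hxn h3)
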